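/- Let k be a field of characteristic p > 0, R = k[t][x,y], q a power of p, I_q = (x^q, y^q, xy(x−y)(x−ty)), and J_q = I_q + (x^2 y^{q−1}). Then for every nonzero f ∈ k[t], the colon ideal J_q : f equals J_q. -/

import Mathlib

open MvPolynomial

/-- Katzman's ideal `I_q = (x^q, y^q, xy(x-y)(x-ty))` in `R = k[t][x,y]`, realized as
`MvPolynomial (Fin 2) (Polynomial k)` with `x = X 0`, `y = X 1`, `t = C Polynomial.X`. -/
noncomputable def katzmanIdeal (k : Type*) [Field k] (q : ℕ) :
    Ideal (MvPolynomial (Fin 2) (Polynomial k)) :=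
  Ideal.span {X 0 ^ q, X 1 ^ q,
    X 0 * X 1 * (X 0 - X 1) * (X 0 - C Polynomial.X * X 1)}

/-- `τ_q = 1 + t + ... + t^{q-2} ∈ k[t]`. -/
noncomputable def tau (k : Type*) [Field k] (q : ℕ) : Polynomial k :=
  ∑ i ∈ Finset.range (q - 1), Polynomial.X ^ i

/-- `J_q = I_q + (x² y^{q-1})`. -/
noncomputable def katzmanJ (k : Type*) [Field k] (q : ℕ) :
    Ideal (MvPolynomial (Fin 2) (Polynomial k)) :=
  katzmanIdeal k q + Ideal.span {X 0 ^ 2 * X 1 ^ (q - 1)}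

/-- The polynomial `g = xy(x-y)(x-ty)`. -/
noncomputable def gg (k : Type*) [Field k] : MvPolynomial (Fin 2) (Polynomial k) :=
  X 0 * X 1 * (X 0 - X 1) * (X 0 - C Polynomial.X * X 1)

section Aux

variable {k : Type*} [Field k] {q : ℕ}

lemma deg2 (m : Fin 2 →₀ ℕ) : m.degree = m 0 + m 1 := by
  rw [Finsupp.degree, ← Fin.sum_univ_two (f := fun i => m i)]
  exact Finset.sum_subset (Finset.subset_univ _)
    (fun i _ hi => Finsupp.notMem_support_iff.mp hi)

lemma mono_eq (i j : ℕ) (a : Polynomial k) :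
    monomial (Finsupp.single 0 i + Finsupp.single 1 j) a = C a * X 0 ^ i * X (1 : Fin 2) ^ j := by
  rw [X_pow_eq_monomial, X_pow_eq_monomial, C_apply, monomial_mul, monomial_mul]
  simp

lemma fin2_eq (m : Fin 2 →₀ ℕ) : m = Finsupp.single 0 (m 0) + Finsupp.single 1 (m 1) := by
  ext i
  fin_cases i <;> simp [Finsupp.single_apply]

lemma deg_single_add (i j : ℕ) :
    (Finsupp.single (0 : Fin 2) i + Finsupp.single 1 j).degree = i + j := by
  rw [deg2]
  simp

lemma deg_single (i : Fin 2) (n : ℕ) : (Finsupp.single i n).degree = n := by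
  rw [deg2]; fin_cases i <;> simp [Finsupp.single_apply]

lemma gg_eq : gg k =
    monomial (Finsupp.single 0 3 + Finsupp.single 1 1) 1
    + monomial (Finsupp.single 0 2 + Finsupp.single 1 2) (-(1 + Polynomial.X))
    + monomial (Finsupp.single 0 1 + Finsupp.single 1 3) Polynomial.X := by
  rw [mono_eq, mono_eq, mono_eq, gg]
  push_cast [map_add, map_neg, map_one]
  ring

lemma coeff_gg : coeff (Finsupp.single 0 3 + Finsupp.single 1 1) (gg k) = 1 := by
  rw [gg_eq, coeff_add, coeff_add, coeff_monomial, coeff_monomial, coeff_monomial,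
    if_pos rfl, if_neg, if_neg]
  · simp
  · intro hc
    have := DFunLike.congr_fun hc (0 : Fin 2)
    simp [Finsupp.single_apply] at this
  · intro hc
    have := DFunLike.congr_fun hc (0 : Fin 2)
    simp [Finsupp.single_apply] at this

lemma gg_ne_zero : (gg k) ≠ 0 := fun h => by simpa [h] using (coeff_gg (k := k))

lemma not_dvd_gg {f : Polynomial k} (hf : ¬ IsUnit f) :
    ¬ (C f : MvPolynomial (Fin 2) (Polynomial k)) ∣ gg k := by
  rintro ⟨w, hw⟩
  apply hf
  have : (1 : Polynomial k) = f * coeff (Finsupp.single 0 3 + Finsupp.single 1 1) w := by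
    rw [← coeff_gg (k := k), hw, coeff_C_mul]
  exact IsUnit.of_mul_eq_one _ this.symm

lemma dvd_of_mul_gg (f : Polynomial k) :
    ∀ u v : MvPolynomial (Fin 2) (Polynomial k), C f * v = u * gg k →
      (C f : MvPolynomial (Fin 2) (Polynomial k)) ∣ u := by
  induction f using UniqueFactorizationMonoid.induction_on_prime with
  | h₁ =>
    intro u v h
    rw [map_zero, zero_mul] at h
    rcases mul_eq_zero.mp h.symm with h' | h'
    · rw [h', map_zero]
    · exact absurd h' gg_ne_zero
  | h₂ x hx =>
    intro u v h
    exact (hx.map (C : Polynomial k →+* MvPolynomial (Fin 2) (Polynomial k))).dvd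
  | h₃ a p ha hp IH =>
    intro u v h
    have hpC : Prime (C p : MvPolynomial (Fin 2) (Polynomial k)) :=
      (prime_C_iff (Fin 2)).mpr hp
    rw [map_mul, mul_assoc] at h
    have hdvd : (C p : MvPolynomial (Fin 2) (Polynomial k)) ∣ u * gg k := ⟨C a * v, h.symm⟩
    rcases hpC.2.2 _ _ hdvd with hu | hgg
    · obtain ⟨u₁, rfl⟩ := hu
      rw [mul_assoc] at h
      have h' : C a * v = u₁ * gg k := mul_left_cancel₀ hpC.ne_zero h
      obtain ⟨w, rfl⟩ := IH _ _ h'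
      exact ⟨w, by rw [map_mul]; ring⟩
    · exact absurd hgg (not_dvd_gg hp.not_unit)

lemma J_eq_span : katzmanJ k q =
    Ideal.span {X 0 ^ 2 * X 1 ^ (q - 1), X 0 ^ q, X 1 ^ q, gg k} := by
  rw [katzmanJ, katzmanIdeal, Ideal.add_eq_sup, sup_comm, ← Ideal.span_union, gg,
    Set.singleton_union]

lemma mem_J_iff {w : MvPolynomial (Fin 2) (Polynomial k)} :
    w ∈ katzmanJ k q ↔ ∃ a b c e : MvPolynomial (Fin 2) (Polynomial k),
      w = a * X 0 ^ q + b * X 1 ^ q + c * gg k + e * (X 0 ^ 2 * X 1 ^ (q - 1)) := by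
  rw [J_eq_span]
  constructor
  · intro hw
    rw [Ideal.mem_span_insert] at hw
    obtain ⟨e, z1, hz1, rfl⟩ := hw
    rw [Ideal.mem_span_insert] at hz1
    obtain ⟨a, z2, hz2, rfl⟩ := hz1
    rw [Ideal.mem_span_insert] at hz2
    obtain ⟨b, z3, hz3, rfl⟩ := hz2
    rw [Ideal.mem_span_singleton] at hz3
    obtain ⟨c, rfl⟩ := hz3
    exact ⟨a, b, c, e, by ring⟩
  · rintro ⟨a, b, c, e, rfl⟩
    have h1 : (X 0 ^ q : MvPolynomial (Fin 2) (Polynomial k)) ∈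
        Ideal.span {X 0 ^ 2 * X 1 ^ (q - 1), X 0 ^ q, X 1 ^ q, gg k} :=
      Ideal.subset_span (by simp)
    have h2 : (X 1 ^ q : MvPolynomial (Fin 2) (Polynomial k)) ∈
        Ideal.span {X 0 ^ 2 * X 1 ^ (q - 1), X 0 ^ q, X 1 ^ q, gg k} :=
      Ideal.subset_span (by simp)
    have h3 : gg k ∈ Ideal.span {X 0 ^ 2 * X 1 ^ (q - 1), X 0 ^ q, X 1 ^ q, gg k} :=
      Ideal.subset_span (by simp)
    have h4 : (X 0 ^ 2 * X 1 ^ (q - 1) : MvPolynomial (Fin 2) (Polynomial k)) ∈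
        Ideal.span {X 0 ^ 2 * X 1 ^ (q - 1), X 0 ^ q, X 1 ^ q, gg k} :=
      Ideal.subset_span (by simp)
    exact add_mem (add_mem (add_mem (Ideal.mul_mem_left _ _ h1) (Ideal.mul_mem_left _ _ h2))
      (Ideal.mul_mem_left _ _ h3)) (Ideal.mul_mem_left _ _ h4)

lemma pow_mem_J_eq (hq1 : 1 ≤ q) :
    ∀ i j : ℕ, i + j = q + 1 →
      (X 0 ^ i * X 1 ^ j : MvPolynomial (Fin 2) (Polynomial k)) ∈ katzmanJ k q := by
  intro i
  induction i using Nat.strong_induction_on with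
  | _ i IH =>
    intro j hij
    match i, hij with
    | 0, hij =>
      refine mem_J_iff.mpr ⟨0, X 1, 0, 0, ?_⟩
      have : j = q + 1 := by omega
      subst this
      rw [pow_succ]; ring
    | 1, hij =>
      refine mem_J_iff.mpr ⟨0, X 0, 0, 0, ?_⟩
      have : j = q := by omega
      subst this; ring
    | 2, hij =>
      refine mem_J_iff.mpr ⟨0, 0, 0, 1, ?_⟩
      have : j = q - 1 := by omega
      subst this; ring
    | (i' + 3), hij =>
      rcases Nat.eq_zero_or_pos j with hj | hj
      · subst hj
        have : i' + 3 = q + 1 := by omega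
        refine mem_J_iff.mpr ⟨X 0, 0, 0, 0, ?_⟩
        rw [this, pow_succ]; ring
      · obtain ⟨j', rfl⟩ : ∃ j', j = j' + 1 := ⟨j - 1, by omega⟩
        have key : (X 0 ^ (i' + 3) * X 1 ^ (j' + 1) : MvPolynomial (Fin 2) (Polynomial k)) =
            gg k * (X 0 ^ i' * X 1 ^ j')
            + (1 + C Polynomial.X) * (X 0 ^ (i' + 2) * X 1 ^ (j' + 2))
            - C Polynomial.X * (X 0 ^ (i' + 1) * X 1 ^ (j' + 3)) := by
          rw [gg]; ring
        rw [key]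
        refine sub_mem (add_mem ?_ ?_) ?_
        · exact Ideal.mul_mem_right _ _ (mem_J_iff.mpr ⟨0, 0, 1, 0, by ring⟩)
        · exact Ideal.mul_mem_left _ _ (IH (i' + 2) (by omega) (j' + 2) (by omega))
        · exact Ideal.mul_mem_left _ _ (IH (i' + 1) (by omega) (j' + 3) (by omega))

lemma pow_mem_J (hq1 : 1 ≤ q) (i j : ℕ) (hij : q + 1 ≤ i + j) :
    (X 0 ^ i * X 1 ^ j : MvPolynomial (Fin 2) (Polynomial k)) ∈ katzmanJ k q := by
  set i' := min i (q + 1) with hi'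
  set j' := q + 1 - i' with hj'
  have h1 : i' ≤ i := by omega
  have h2 : j' ≤ j := by omega
  have : (X 0 ^ i * X 1 ^ j : MvPolynomial (Fin 2) (Polynomial k)) =
      (X 0 ^ i' * X 1 ^ j') * (X 0 ^ (i - i') * X 1 ^ (j - j')) := by
    rw [mul_mul_mul_comm, ← pow_add, ← pow_add]
    congr 2 <;> omega
  rw [this]
  exact Ideal.mul_mem_right _ _ (pow_mem_J_eq hq1 i' j' (by omega))

lemma homog_high_mem (hq1 : 1 ≤ q) {d : ℕ} (hd : q + 1 ≤ d)
    {w : MvPolynomial (Fin 2) (Polynomial k)} (hw : w.IsHomogeneous d) :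
    w ∈ katzmanJ k q := by
  rw [← w.support_sum_monomial_coeff]
  refine Submodule.sum_mem _ (fun m hm => ?_)
  have hdeg : m.degree = d := by
    rw [Finsupp.degree_eq_weight_one]
    exact hw (mem_support_iff.mp hm)
  have : monomial m (coeff m w) = C (coeff m w) * X 0 ^ (m 0) * X (1 : Fin 2) ^ (m 1) := by
    rw [← mono_eq, ← fin2_eq]
  rw [this, mul_assoc]
  refine Ideal.mul_mem_left _ _ (pow_mem_J hq1 _ _ ?_)
  rw [deg2] at hdeg
  omega

lemma comp_mul_monomial_le (p : MvPolynomial (Fin 2) (Polynomial k)) (s : Fin 2 →₀ ℕ)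
    (c : Polynomial k) {d : ℕ} (h : s.degree ≤ d) :
    homogeneousComponent d (p * monomial s c) =
      homogeneousComponent (d - s.degree) p * monomial s c := by
  ext1 m
  rw [coeff_homogeneousComponent, coeff_mul_monomial', coeff_mul_monomial']
  by_cases hsm : s ≤ m
  · have h0 : s 0 ≤ m 0 := hsm 0
    have h1 : s 1 ≤ m 1 := hsm 1
    have hms : (m - s).degree = m.degree - s.degree := by
      rw [deg2, deg2, deg2, Finsupp.tsub_apply, Finsupp.tsub_apply]; omega
    have hsd : s.degree ≤ m.degree := by rw [deg2, deg2]; omega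
    rw [if_pos hsm, if_pos hsm, coeff_homogeneousComponent]
    by_cases hmd : m.degree = d
    · rw [if_pos hmd, if_pos (by rw [hms, hmd])]
    · rw [if_neg hmd, if_neg (fun hc => by rw [hms] at hc; exact hmd (by omega)), zero_mul]
  · rw [if_neg hsm, if_neg hsm, ite_self]

lemma comp_mul_monomial_lt (p : MvPolynomial (Fin 2) (Polynomial k)) (s : Fin 2 →₀ ℕ)
    (c : Polynomial k) {d : ℕ} (h : d < s.degree) :
    homogeneousComponent d (p * monomial s c) = 0 := by
  ext1 m
  rw [coeff_homogeneousComponent, coeff_mul_monomial', coeff_zero]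
  by_cases hmd : m.degree = d
  · rw [if_pos hmd]
    by_cases hsm : s ≤ m
    · exfalso
      have h0 : s 0 ≤ m 0 := hsm 0
      have h1 : s 1 ≤ m 1 := hsm 1
      have hsd : s.degree ≤ m.degree := by rw [deg2, deg2]; omega
      omega
    · rw [if_neg hsm]
  · rw [if_neg hmd]

lemma comp_mul_Xpow (a : MvPolynomial (Fin 2) (Polynomial k)) (i : Fin 2) (n d : ℕ) :
    homogeneousComponent d (a * X i ^ n) =
      if n ≤ d then homogeneousComponent (d - n) a * X i ^ n else 0 := by
  rw [X_pow_eq_monomial]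
  by_cases h : n ≤ d
  · rw [if_pos h, comp_mul_monomial_le _ _ _ (by rw [deg_single]; exact h), deg_single]
  · rw [if_neg h, comp_mul_monomial_lt _ _ _ (by rw [deg_single]; omega)]

lemma comp_mul_gg (c : MvPolynomial (Fin 2) (Polynomial k)) (d : ℕ) :
    homogeneousComponent d (c * gg k) =
      if 4 ≤ d then homogeneousComponent (d - 4) c * gg k else 0 := by
  rw [gg_eq (k := k), mul_add, mul_add, map_add, map_add]
  by_cases h4 : 4 ≤ d
  · rw [if_pos h4,
      comp_mul_monomial_le _ _ _ (by rw [deg_single_add]; omega),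
      comp_mul_monomial_le _ _ _ (by rw [deg_single_add]; omega),
      comp_mul_monomial_le _ _ _ (by rw [deg_single_add]; omega),
      deg_single_add, deg_single_add, deg_single_add]
    ring
  · rw [if_neg h4,
      comp_mul_monomial_lt _ _ _ (by rw [deg_single_add]; omega),
      comp_mul_monomial_lt _ _ _ (by rw [deg_single_add]; omega),
      comp_mul_monomial_lt _ _ _ (by rw [deg_single_add]; omega), add_zero, add_zero]

lemma key_repr (hq1 : 1 ≤ q) (f : Polynomial k) (hf : f ≠ 0) (α β : Polynomial k)
    (u h : MvPolynomial (Fin 2) (Polynomial k))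
    (hrel : C f * h = C α * X 0 ^ q + C β * X 1 ^ q + u * gg k) :
    ∃ a b c : MvPolynomial (Fin 2) (Polynomial k),
      h = a * X 0 ^ q + b * X 1 ^ q + c * gg k := by
  have hCf : (C f : MvPolynomial (Fin 2) (Polynomial k)) ≠ 0 := by
    simpa using hf
  have h0 := congrArg (aeval ![X 0, 0] :
    MvPolynomial (Fin 2) (Polynomial k) →ₐ[Polynomial k] MvPolynomial (Fin 2) (Polynomial k)) hrel
  rw [gg] at h0
  simp [zero_pow (by omega : q ≠ 0), algebraMap_eq] at h0
  have hα : f ∣ α := by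
    have := congrArg (coeff (Finsupp.single 0 q)) h0
    rw [coeff_C_mul, coeff_C_mul, X_pow_eq_monomial, coeff_monomial, if_pos rfl,
      mul_one] at this
    exact ⟨_, this.symm⟩
  have h1 := congrArg (aeval ![X 0, X 0] :
    MvPolynomial (Fin 2) (Polynomial k) →ₐ[Polynomial k] MvPolynomial (Fin 2) (Polynomial k)) hrel
  rw [gg] at h1
  simp [algebraMap_eq] at h1
  have hαβ : f ∣ (α + β) := by
    have := congrArg (coeff (Finsupp.single 0 q)) h1
    rw [coeff_add, coeff_C_mul, coeff_C_mul, coeff_C_mul, X_pow_eq_monomial, coeff_monomial,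
      if_pos rfl, mul_one, mul_one] at this
    exact ⟨_, this.symm⟩
  have hβ : f ∣ β := (dvd_add_right hα).mp hαβ
  obtain ⟨cα, rfl⟩ := hα
  obtain ⟨cβ, rfl⟩ := hβ
  have hrel' : C f * (h - C cα * X 0 ^ q - C cβ * X 1 ^ q) = u * gg k := by
    simp only [map_mul] at hrel
    rw [mul_sub, mul_sub, hrel]
    ring
  obtain ⟨u', rfl⟩ := dvd_of_mul_gg f _ _ hrel'
  rw [mul_assoc] at hrel'
  have : h - C cα * X 0 ^ q - C cβ * X 1 ^ q = u' * gg k := mul_left_cancel₀ hCf hrel'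
  exact ⟨C cα, C cβ, u', by rw [← this]; ring⟩

lemma low_comp_mem (hq1 : 1 ≤ q) (f : Polynomial k) (hf : f ≠ 0)
    {w : MvPolynomial (Fin 2) (Polynomial k)} (hw : C f * w ∈ katzmanJ k q)
    {d : ℕ} (hd : d ≤ q) :
    homogeneousComponent d w ∈ katzmanJ k q := by
  obtain ⟨a, b, c, e, hrel⟩ := mem_J_iff.mp hw
  have hcomp := congrArg (homogeneousComponent d) hrel
  rw [homogeneousComponent_C_mul, map_add, map_add, map_add] at hcomp
  -- the e-term vanishes
  have he : homogeneousComponent d (e * (X 0 ^ 2 * X 1 ^ (q - 1))) = 0 := by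
    have hmono : (X 0 ^ 2 * X 1 ^ (q - 1) : MvPolynomial (Fin 2) (Polynomial k)) =
        monomial (Finsupp.single 0 2 + Finsupp.single 1 (q - 1)) 1 := by
      rw [mono_eq]; simp
    rw [hmono, comp_mul_monomial_lt _ _ _ (by rw [deg_single_add]; omega)]
  rw [he, add_zero, comp_mul_Xpow, comp_mul_Xpow, comp_mul_gg] at hcomp
  set α : Polynomial k := if q ≤ d then coeff 0 (homogeneousComponent (d - q) a) else 0 with hαdef
  set β : Polynomial k := if q ≤ d then coeff 0 (homogeneousComponent (d - q) b) else 0 with hβdef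
  set u : MvPolynomial (Fin 2) (Polynomial k) :=
    if 4 ≤ d then homogeneousComponent (d - 4) c else 0 with hudef
  have hrel2 : C f * homogeneousComponent d w =
      C α * X 0 ^ q + C β * X 1 ^ q + u * gg k := by
    rw [hcomp]
    congr 1
    · congr 1
      · by_cases hqd : q ≤ d
        · have hdq' : d = q := le_antisymm hd hqd
          subst hdq'
          rw [if_pos hqd, hαdef, if_pos hqd, Nat.sub_self, homogeneousComponent_zero]
          simp
        · rw [if_neg hqd, hαdef, if_neg hqd, map_zero, zero_mul]
      · by_cases hqd : q ≤ d
        · have hdq' : d = q := le_antisymm hd hqd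
          subst hdq'
          rw [if_pos hqd, hβdef, if_pos hqd, Nat.sub_self, homogeneousComponent_zero]
          simp
        · rw [if_neg hqd, hβdef, if_neg hqd, map_zero, zero_mul]
    · by_cases h4 : 4 ≤ d
      · rw [if_pos h4, hudef, if_pos h4]
      · rw [if_neg h4, hudef, if_neg h4, zero_mul]
  obtain ⟨a', b', c', hrep⟩ := key_repr hq1 f hf α β u _ hrel2
  exact mem_J_iff.mpr ⟨a', b', c', 0, by rw [hrep]; ring⟩

end Aux

/-- For every nonzero `f ∈ k[t]`, the colon ideal `J_q : f` equals `J_q`. -/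
theorem katzmanJ_colon_eq_self
    {k : Type*} [Field k] {p : ℕ} (hp : p.Prime) [CharP k p]
    (q : ℕ) (hq : ∃ e : ℕ, q = p ^ e)
    (f : Polynomial k) (hf : f ≠ 0) :
    (katzmanJ k q).colon
      ((Ideal.span {C f} : Ideal (MvPolynomial (Fin 2) (Polynomial k))) :
        Set (MvPolynomial (Fin 2) (Polynomial k))) = katzmanJ k q := by
  have hq1 : 1 ≤ q := by
    obtain ⟨e, rfl⟩ := hq
    exact Nat.one_le_iff_ne_zero.mpr (pow_ne_zero _ hp.pos.ne')
  ext w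
  rw [Ideal.mem_colon_span_singleton]
  constructor
  · intro hw
    rw [mul_comm] at hw
    have hsum := sum_homogeneousComponent w
    rw [← hsum]
    refine Submodule.sum_mem _ (fun d _ => ?_)
    by_cases hdq : d ≤ q
    · exact low_comp_mem hq1 f hf hw hdq
    · exact homog_high_mem hq1 (by omega) (homogeneousComponent_isHomogeneous d w)
  · intro hw
    exact Ideal.mul_mem_right _ _ hw
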